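/- arXiv:2103.13530 — 3 statements merged into one kernel-verified Lean document; each statement's English description precedes it below -/
import Mathlib

section
/- For the relaxed battery profit-maximization problem with separate charge/discharge variables and without the complementarity constraint, if pi_t >= 0 for all t, then the transformed solution p^{*,b,+}_t = sigma^+ * max((sigma^+)^{-1} p'^{,b,+}_t - sigma^- p'^{,b,-}_t, 0) and p^{*,b,-}_t = (sigma^-)^{-1} * max(sigma^- p'^{,b,-}_t - (sigma^+)^{-1} p'^{,b,+}_t, 0), applied to any relaxed-optimal (p'^{,b,+}, p'^{,b,-}), satisfies: (i) the complementarity constraint p^{*,b,+}_t * p^{*,b,-}_t = 0 for all t, (ii) the same stored-energy trajectory, (iii) the power bounds, and (iv) an objective value no worse than the relaxed optimum. Hence the relaxed and original problems have equal optimal values: W'_i(pi) = W_i(pi). -/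
open Finset

/-- State of charge of the lossy battery: `s 0 = s0` and
`s (t+1) = θ * s t + (σm * pm (t+1) - σp⁻¹ * pp (t+1)) * ΔT`. -/
noncomputable def lossySoc (θ σm σpinv ΔT s0 : ℝ) (pp pm : ℕ → ℝ) : ℕ → ℝ
  | 0 => s0
  | (t+1) => θ * lossySoc θ σm σpinv ΔT s0 pp pm t
      + (σm * pm (t+1) - σpinv * pp (t+1)) * ΔT

/-- For the relaxed battery problem with nonnegative prices, the transformed
solution satisfies complementarity, preserves the stored-energy trajectory and the power
bounds, and has objective no worse than the relaxed optimum; hence the relaxed and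
original problems have equal optimal values. -/
theorem relaxed_battery_equal_value
    (T : ℕ) (ΔT θ σp σm Sbar s0 : ℝ) (Pbarp Pbarm : ℕ → ℝ)
    (pi : ℕ → ℝ)
    (hσp0 : 0 < σp) (hσp1 : σp ≤ 1) (hσm0 : 0 < σm) (hσm1 : σm ≤ 1)
    (hθ0 : 0 ≤ θ) (hθ1 : θ < 1) (hΔT : 0 < ΔT)
    (hpi : ∀ t, 0 ≤ pi t)
    (FeasRel Feas : (ℕ → ℝ) → (ℕ → ℝ) → Prop)
    (hFeasRel : ∀ pp pm, FeasRel pp pm ↔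
      ((∀ t, 1 ≤ t → t ≤ T → 0 ≤ pp t ∧ pp t ≤ Pbarp t ∧ 0 ≤ pm t ∧ pm t ≤ Pbarm t) ∧
       (∀ t, t ≤ T → 0 ≤ lossySoc θ σm σp⁻¹ ΔT s0 pp pm t ∧
          lossySoc θ σm σp⁻¹ ΔT s0 pp pm t ≤ Sbar)))
    (hFeas : ∀ pp pm, Feas pp pm ↔
      (FeasRel pp pm ∧ ∀ t, 1 ≤ t → t ≤ T → pp t * pm t = 0))
    (obj : (ℕ → ℝ) → (ℕ → ℝ) → ℝ)
    (hobj : ∀ pp pm, obj pp pm = -∑ t ∈ Finset.Icc 1 T, pi t * (pp t - pm t))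
    (pp' pm' : ℕ → ℝ)
    (hfeas' : FeasRel pp' pm')
    (hopt' : ∀ rp rm, FeasRel rp rm → obj pp' pm' ≤ obj rp rm)
    (pps ppm : ℕ → ℝ)
    (hpps : ∀ t, pps t = σp * max (σp⁻¹ * pp' t - σm * pm' t) 0)
    (hppm : ∀ t, ppm t = σm⁻¹ * max (σm * pm' t - σp⁻¹ * pp' t) 0) :
    (∀ t, pps t * ppm t = 0) ∧
    (∀ t, lossySoc θ σm σp⁻¹ ΔT s0 pps ppm t = lossySoc θ σm σp⁻¹ ΔT s0 pp' pm' t) ∧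
    (∀ t, 1 ≤ t → t ≤ T → 0 ≤ pps t ∧ pps t ≤ Pbarp t ∧ 0 ≤ ppm t ∧ ppm t ≤ Pbarm t) ∧
    obj pps ppm ≤ obj pp' pm' ∧
    sInf {x : ℝ | ∃ pp pm, Feas pp pm ∧ x = obj pp pm}
      = sInf {x : ℝ | ∃ pp pm, FeasRel pp pm ∧ x = obj pp pm} := by

  have hσpne : σp ≠ 0 := ne_of_gt hσp0
  have hσmne : σm ≠ 0 := ne_of_gt hσm0
  have hσpi : 1 ≤ σp⁻¹ := by rw [le_inv_comm₀ one_pos hσp0]; simpa using hσp1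
  have hσmi : 1 ≤ σm⁻¹ := by rw [le_inv_comm₀ one_pos hσm0]; simpa using hσm1
  have hpp1 : σp * σp⁻¹ = 1 := mul_inv_cancel₀ hσpne
  have hmm1 : σm * σm⁻¹ = 1 := mul_inv_cancel₀ hσmne
  obtain ⟨hbnd', hsoc'⟩ := (hFeasRel pp' pm').mp hfeas'
  have hcomp : ∀ t, pps t * ppm t = 0 := by
    intro t
    rw [hpps, hppm]
    rcases le_total (σp⁻¹ * pp' t) (σm * pm' t) with h | h
    · rw [max_eq_right (by linarith : σp⁻¹ * pp' t - σm * pm' t ≤ 0)]; ring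
    · rw [max_eq_right (by linarith : σm * pm' t - σp⁻¹ * pp' t ≤ 0)]; ring
  have hnet : ∀ t, σm * ppm t - σp⁻¹ * pps t = σm * pm' t - σp⁻¹ * pp' t := by
    intro t
    rw [hpps, hppm]
    rcases le_total (σp⁻¹ * pp' t) (σm * pm' t) with h | h
    · rw [max_eq_left (by linarith : (0:ℝ) ≤ σm * pm' t - σp⁻¹ * pp' t),
        max_eq_right (by linarith : σp⁻¹ * pp' t - σm * pm' t ≤ 0)]
      have h2 : σp⁻¹ * σp = 1 := inv_mul_cancel₀ hσpne
      nlinarith [hmm1]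
    · rw [max_eq_right (by linarith : σm * pm' t - σp⁻¹ * pp' t ≤ 0),
        max_eq_left (by linarith : (0:ℝ) ≤ σp⁻¹ * pp' t - σm * pm' t)]
      have h2 : σp⁻¹ * σp = 1 := inv_mul_cancel₀ hσpne
      nlinarith [hmm1]
  have hsoc : ∀ t, lossySoc θ σm σp⁻¹ ΔT s0 pps ppm t
      = lossySoc θ σm σp⁻¹ ΔT s0 pp' pm' t := by
    intro t
    induction t with
    | zero => rfl
    | succ n ih =>
      show θ * lossySoc θ σm σp⁻¹ ΔT s0 pps ppm n
          + (σm * ppm (n+1) - σp⁻¹ * pps (n+1)) * ΔT = _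
      rw [ih, hnet]
      rfl
  have hbnd : ∀ t, 1 ≤ t → t ≤ T → 0 ≤ pps t ∧ pps t ≤ Pbarp t ∧ 0 ≤ ppm t ∧ ppm t ≤ Pbarm t := by
    intro t h1 h2
    obtain ⟨hp0, hp1, hm0, hm1⟩ := hbnd' t h1 h2
    have hs : 0 ≤ pps t := by
      rw [hpps]; exact mul_nonneg hσp0.le (le_max_right _ _)
    have hm : 0 ≤ ppm t := by
      rw [hppm]; exact mul_nonneg (by positivity) (le_max_right _ _)
    refine ⟨hs, ?_, hm, ?_⟩
    · rw [hpps]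
      rcases le_total (σp⁻¹ * pp' t - σm * pm' t) 0 with h | h
      · rw [max_eq_right h]; simpa using le_trans hp0 hp1
      · rw [max_eq_left h]
        nlinarith [mul_nonneg (mul_nonneg hσp0.le hσm0.le) hm0]
    · rw [hppm]
      rcases le_total (σm * pm' t - σp⁻¹ * pp' t) 0 with h | h
      · rw [max_eq_right h]; simpa using le_trans hm0 hm1
      · rw [max_eq_left h]
        have hinvpos : 0 < σm⁻¹ := by positivity
        nlinarith [mul_nonneg (mul_nonneg hinvpos.le (inv_pos.mpr hσp0).le) hp0]
  have hterm : ∀ t ∈ Finset.Icc 1 T, pi t * (pp' t - pm' t) ≤ pi t * (pps t - ppm t) := by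
    intro t ht
    rw [Finset.mem_Icc] at ht
    obtain ⟨hp0, hp1, hm0, hm1⟩ := hbnd' t ht.1 ht.2
    refine mul_le_mul_of_nonneg_left ?_ (hpi t)
    rw [hpps, hppm]
    rcases le_total (σp⁻¹ * pp' t) (σm * pm' t) with h | h
    · rw [max_eq_right (by linarith : σp⁻¹ * pp' t - σm * pm' t ≤ 0),
        max_eq_left (by linarith : (0:ℝ) ≤ σm * pm' t - σp⁻¹ * pp' t)]
      have hinvpos : 0 < σm⁻¹ := by positivity
      nlinarith [mul_nonneg (mul_nonneg (sub_nonneg.mpr hσmi) (inv_pos.mpr hσp0).le) hp0,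
        mul_nonneg (sub_nonneg.mpr hσpi) hp0]
    · rw [max_eq_left (by linarith : (0:ℝ) ≤ σp⁻¹ * pp' t - σm * pm' t),
        max_eq_right (by linarith : σm * pm' t - σp⁻¹ * pp' t ≤ 0)]
      nlinarith [mul_nonneg (mul_nonneg hσp0.le hσm0.le) hm0,
        mul_nonneg (sub_nonneg.mpr hσp1) (mul_nonneg hσm0.le hm0),
        mul_nonneg (sub_nonneg.mpr hσm1) hm0]
  have hople : obj pps ppm ≤ obj pp' pm' := by
    rw [hobj, hobj]
    have := Finset.sum_le_sum hterm
    linarith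
  have hfeasR : FeasRel pps ppm := by
    rw [hFeasRel]
    exact ⟨hbnd, fun t ht => hsoc t ▸ hsoc' t ht⟩
  have hfeasO : Feas pps ppm := by
    rw [hFeas]
    exact ⟨hfeasR, fun t _ _ => hcomp t⟩
  have hopeq : obj pps ppm = obj pp' pm' :=
    le_antisymm hople (hopt' pps ppm hfeasR)
  refine ⟨hcomp, hsoc, hbnd, hople, ?_⟩
  have h1 : IsLeast {x : ℝ | ∃ pp pm, Feas pp pm ∧ x = obj pp pm} (obj pp' pm') := by
    constructor
    · exact ⟨pps, ppm, hfeasO, hopeq.symm⟩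
    · rintro x ⟨rp, rm, hf, rfl⟩
      exact hopt' rp rm ((hFeas rp rm).mp hf).1
  have h2 : IsLeast {x : ℝ | ∃ pp pm, FeasRel pp pm ∧ x = obj pp pm} (obj pp' pm') := by
    constructor
    · exact ⟨pp', pm', hfeas', rfl⟩
    · rintro x ⟨rp, rm, hf, rfl⟩
      exact hopt' rp rm hf
  rw [h1.csInf_eq, h2.csInf_eq]
end

section
/- In the lossy battery setting with round-trip efficiency sigma^+ * sigma^- < 1 and strictly positive prices pi_t > 0 for all t, every optimal solution of the relaxed battery profit-maximization problem (without the complementarity constraint) already satisfies the complementarity constraint p^{b,+}_t * p^{b,-}_t = 0 for all t; i.e., the relaxation is exact. -/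
open Finset

/-- With strictly lossy round-trip efficiency `σp * σm < 1` and strictly
positive prices, every optimal solution of the relaxed battery problem (without the
complementarity constraint) already satisfies `pp t * pm t = 0`; the relaxation is exact. -/
theorem relaxation_exact
    (T : ℕ) (ΔT θ σp σm Sbar s0 : ℝ) (Pbarp Pbarm : ℕ → ℝ)
    (pi : ℕ → ℝ)
    (hσp0 : 0 < σp) (hσp1 : σp ≤ 1) (hσm0 : 0 < σm) (hσm1 : σm ≤ 1)
    (hlossy : σp * σm < 1)
    (hθ0 : 0 ≤ θ) (hθ1 : θ < 1) (hΔT : 0 < ΔT)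
    (hpi : ∀ t, 1 ≤ t → t ≤ T → 0 < pi t)
    (FeasRel : (ℕ → ℝ) → (ℕ → ℝ) → Prop)
    (hFeasRel : ∀ pp pm, FeasRel pp pm ↔
      ((∀ t, 1 ≤ t → t ≤ T → 0 ≤ pp t ∧ pp t ≤ Pbarp t ∧ 0 ≤ pm t ∧ pm t ≤ Pbarm t) ∧
       (∀ t, t ≤ T → 0 ≤ lossySoc θ σm σp⁻¹ ΔT s0 pp pm t ∧
          lossySoc θ σm σp⁻¹ ΔT s0 pp pm t ≤ Sbar)))
    (obj : (ℕ → ℝ) → (ℕ → ℝ) → ℝ)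
    (hobj : ∀ pp pm, obj pp pm = -∑ t ∈ Finset.Icc 1 T, pi t * (pp t - pm t))
    (pp pm : ℕ → ℝ)
    (hfeas : FeasRel pp pm)
    (hopt : ∀ rp rm, FeasRel rp rm → obj pp pm ≤ obj rp rm) :
    ∀ t, 1 ≤ t → t ≤ T → pp t * pm t = 0 := by

  intro t0 ht1 ht2
  by_contra hne
  obtain ⟨hbnd, hsoc⟩ := (hFeasRel pp pm).mp hfeas
  obtain ⟨hpp0, hppU, hpm0, hpmU⟩ := hbnd t0 ht1 ht2
  have hppos : 0 < pp t0 := lt_of_le_of_ne hpp0 (fun h => hne (by rw [← h]; ring))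
  have hmpos : 0 < pm t0 := lt_of_le_of_ne hpm0 (fun h => hne (by rw [← h]; ring))
  set ε := min (pp t0) (pm t0) with hε
  have hεpos : 0 < ε := lt_min hppos hmpos
  have hεp : ε ≤ pp t0 := min_le_left _ _
  have hεm : ε ≤ pm t0 := min_le_right _ _
  set rp : ℕ → ℝ := fun t => if t = t0 then pp t - σp * σm * ε else pp t with hrp
  set rm : ℕ → ℝ := fun t => if t = t0 then pm t - ε else pm t with hrm
  have hkey : ∀ t, σm * rm t - σp⁻¹ * rp t = σm * pm t - σp⁻¹ * pp t := by
    intro t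
    by_cases h : t = t0
    · simp only [hrp, hrm, h, if_pos rfl]
      field_simp
      ring
    · simp [hrp, hrm, h]
  have hsoceq : ∀ t, lossySoc θ σm σp⁻¹ ΔT s0 rp rm t = lossySoc θ σm σp⁻¹ ΔT s0 pp pm t := by
    intro t
    induction t with
    | zero => rfl
    | succ n ih => simp [lossySoc, ih, hkey]
  have hσσε : σp * σm * ε ≤ ε := by nlinarith
  have hσσε0 : 0 ≤ σp * σm * ε := by positivity
  have hfeas' : FeasRel rp rm := by
    rw [hFeasRel]
    refine ⟨fun t h1 h2 => ?_, fun t h => by rw [hsoceq]; exact hsoc t h⟩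
    by_cases h : t = t0
    · subst h
      obtain ⟨a, b, c, d⟩ := hbnd t h1 h2
      simp only [hrp, hrm, if_pos rfl]
      refine ⟨by linarith, by linarith, by linarith, by linarith⟩
    · simp only [hrp, hrm, if_neg h]
      exact hbnd t h1 h2
  have hle := hopt rp rm hfeas'
  rw [hobj, hobj] at hle
  have hdiff : ∑ t ∈ Finset.Icc 1 T, pi t * (rp t - rm t)
      = (∑ t ∈ Finset.Icc 1 T, pi t * (pp t - pm t))
        + pi t0 * ((1 - σp * σm) * ε) := by
    have hcong : ∀ t ∈ Finset.Icc 1 T, pi t * (rp t - rm t)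
        = pi t * (pp t - pm t) + (if t = t0 then pi t0 * ((1 - σp * σm) * ε) else 0) := by
      intro t _
      by_cases h : t = t0
      · subst h
        simp only [hrp, hrm, if_pos rfl, if_true]
        ring
      · simp [hrp, hrm, h]
    rw [Finset.sum_congr rfl hcong, Finset.sum_add_distrib, Finset.sum_ite_eq' (Finset.Icc 1 T)]
    simp [Finset.mem_Icc, ht1, ht2]
  have hpos : 0 < pi t0 * ((1 - σp * σm) * ε) := by
    have := hpi t0 ht1 ht2
    have h1 : 0 < 1 - σp * σm := by linarith
    positivity
  rw [hdiff] at hle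
  linarith
end

section
/- In the extended battery model with efficiencies and self-discharge, the optimal price satisfies, for every battery i and time t, the relation theta * pi*_{t+1} - pi*_t = theta * lambda^{*,b,+}_{i,t+1} - lambda^{*,b,+}_{i,t} + Delta T * (sigma^+)^{-1} * lambda^{*,c}_{i,t}, and also theta * pi*_{t+1} - pi*_t = lambda^{*,b,-}_{i,t} - theta * lambda^{*,b,-}_{i,t+1} + Delta T * sigma^- * lambda^{*,c}_{i,t}, where lambda^{b,+}, lambda^{b,-}, lambda^c are duals of the discharge power, charge power, and capacity constraints. In particular, if at an optimum the battery charges with all power and capacity constraints non-binding at times t and t+1, then pi*_{t+1} = theta^{-1} pi*_t. -/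
open Finset

/-- In the extended battery model with efficiencies and self-discharge, the
stationarity conditions imply the price relations
`θ * pi (t+1) - pi t = θ * lbp i (t+1) - lbp i t + ΔT * σp⁻¹ * lc i t` and
`θ * pi (t+1) - pi t = lbm i t - θ * lbm i (t+1) + ΔT * σm * lc i t`; in particular, if
all relevant duals vanish (non-binding constraints while charging) at `t` and `t+1`, then
`pi (t+1) = θ⁻¹ * pi t`. -/
theorem extended_price_recursion
    {B : Type*} (T : ℕ) (ΔT θ σp σm : ℝ) (hθ : 0 < θ)
    (pi : ℕ → ℝ) (lbp lbm lc : B → ℕ → ℝ)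
    (hstatp : ∀ (i : B) (t : ℕ), t < T →
      pi t = lbp i t - ΔT * σp⁻¹ * ∑ τ ∈ Finset.Ico t T, θ ^ (τ - t) * lc i τ)
    (hstatm : ∀ (i : B) (t : ℕ), t < T →
      pi t = -lbm i t - ΔT * σm * ∑ τ ∈ Finset.Ico t T, θ ^ (τ - t) * lc i τ) :
    ∀ (i : B) (t : ℕ), t + 1 < T →
      (θ * pi (t+1) - pi t = θ * lbp i (t+1) - lbp i t + ΔT * σp⁻¹ * lc i t ∧
       θ * pi (t+1) - pi t = lbm i t - θ * lbm i (t+1) + ΔT * σm * lc i t ∧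
       (lbp i t = 0 → lbp i (t+1) = 0 → lbm i t = 0 → lbm i (t+1) = 0 → lc i t = 0 →
         pi (t+1) = θ⁻¹ * pi t)) := by
  intro i t ht1
  have ht : t < T := Nat.lt_of_succ_lt ht1
  have hsum : ∑ τ ∈ Finset.Ico t T, θ ^ (τ - t) * lc i τ
      = lc i t + θ * ∑ τ ∈ Finset.Ico (t+1) T, θ ^ (τ - (t+1)) * lc i τ := by
    rw [Finset.sum_eq_sum_Ico_succ_bot ht, Finset.mul_sum]
    simp only [Nat.sub_self, pow_zero, one_mul]
    congr 1
    apply Finset.sum_congr rfl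
    intro τ hτ
    have hτ1 : t + 1 ≤ τ := (Finset.mem_Ico.mp hτ).1
    have : τ - t = (τ - (t+1)) + 1 := by omega
    rw [this, pow_succ]
    ring
  have e0p := hstatp i t ht
  have e1p := hstatp i (t+1) ht1
  have e0m := hstatm i t ht
  have e1m := hstatm i (t+1) ht1
  have h1 : θ * pi (t+1) - pi t = θ * lbp i (t+1) - lbp i t + ΔT * σp⁻¹ * lc i t := by
    rw [e0p, e1p, hsum]; ring
  have h2 : θ * pi (t+1) - pi t = lbm i t - θ * lbm i (t+1) + ΔT * σm * lc i t := by
    rw [e0m, e1m, hsum]; ring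
  refine ⟨h1, h2, ?_⟩
  intro a b c d e
  rw [a, b, e] at h1
  have : θ * pi (t+1) = pi t := by linarith
  field_simp
  linarith
end
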